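/- Let (X,d,μ) be a metric measure space, let n > 0 be a real number, let x ∈ X and let c > 0. Then Θ_x(s) = c for every s > 0 if and only if μ(B_r(x)) = c·ω_n·r^n for every r > 0. -/

import Mathlib

open MeasureTheory Metric Filter Set
open scoped ENNReal

/-- The measure is finite and nonzero on every ball of positive radius. -/
def BallMeasureNontrivial {X : Type*} [MetricSpace X] [MeasurableSpace X]
    (μ : Measure X) : Prop :=
  ∀ (x : X) (r : ℝ), 0 < r → 0 < μ (ball x r) ∧ μ (ball x r) < ⊤
/-- The `Θ`-volume `Θ_x(s) = (4πs)^{-n/2} ∫_X exp(−d(x,y)²/(4s)) dμ(y)`,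
as an extended nonnegative real (possibly `+∞`). -/
noncomputable def Theta {X : Type*} [MetricSpace X] [MeasurableSpace X] (μ : Measure X)
    (n : ℝ) (x : X) (s : ℝ) : ℝ≥0∞ :=
  ENNReal.ofReal ((4 * Real.pi * s) ^ (-(n / 2))) *
    ∫⁻ y, ENNReal.ofReal (Real.exp (-(dist x y) ^ 2 / (4 * s))) ∂μ

/-- `ω_n = π^{n/2}/Γ(n/2+1)`. -/
noncomputable def omegaVol (s : ℝ) : ℝ := Real.pi ^ (s / 2) / Real.Gamma (s / 2 + 1)

section Auxiliary

variable {n c : ℝ}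
noncomputable def nuModel (n c : ℝ) : Measure ℝ :=
  (volume.restrict (Ioi (0:ℝ))).withDensity
    (fun y => ENNReal.ofReal (c * omegaVol n * n * y ^ (n - 1)))

variable {n c : ℝ}

lemma omegaVol_pos (hn : 0 < n) : 0 < omegaVol n := by
  have h1 : 0 < Real.pi ^ (n / 2) := Real.rpow_pos_of_pos Real.pi_pos _
  have h2 : 0 < Real.Gamma (n / 2 + 1) := Real.Gamma_pos_of_pos (by linarith)
  exact div_pos h1 h2

lemma nuModel_apply {s : Set ℝ} (hs : MeasurableSet s) :
    nuModel n c s = ∫⁻ y in s ∩ Ioi 0, ENNReal.ofReal (c * omegaVol n * n * y ^ (n - 1)) := by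
  rw [nuModel, withDensity_apply _ hs, Measure.restrict_restrict hs]

lemma nuModel_Iio_nonpos {r : ℝ} (hr : r ≤ 0) :
    nuModel n c (Iio r) = 0 := by
  rw [nuModel_apply measurableSet_Iio, Iio_inter_Ioi]
  have : Ioo (0:ℝ) r = ∅ := Ioo_eq_empty (by intro h; exact absurd hr (not_le.2 h))
  simp [this]

lemma nuModel_Iio (hn : 0 < n) (hc : 0 < c) {r : ℝ} (hr : 0 < r) :
    nuModel n c (Iio r) = ENNReal.ofReal (c * omegaVol n * r ^ n) := by
  rw [nuModel_apply measurableSet_Iio, Iio_inter_Ioi]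
  have hint : IntegrableOn (fun y : ℝ => c * omegaVol n * n * y ^ (n - 1)) (Ioo 0 r) := by
    have hb : IntegrableOn (fun x : ℝ => x ^ (n - 1)) (Ioo 0 r) := by
      rw [← integrableOn_Ioc_iff_integrableOn_Ioo]
      have := (intervalIntegral.intervalIntegrable_rpow' (a := 0) (b := r) (r := n - 1)
        (by linarith)).1
      exact this
    exact hb.const_mul _
  rw [← ofReal_integral_eq_lintegral_ofReal hint]
  · congr 1
    rw [← MeasureTheory.integral_Ioc_eq_integral_Ioo, ← intervalIntegral.integral_of_le hr.le]
    rw [intervalIntegral.integral_const_mul, integral_rpow (Or.inl (by linarith))]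
    rw [sub_add_cancel, Real.zero_rpow (by positivity), sub_zero]
    field_simp
  · filter_upwards [ae_restrict_mem measurableSet_Ioo] with y hy
    have h1 : (0:ℝ) ≤ y ^ (n - 1) := Real.rpow_nonneg hy.1.le _
    have h2 : 0 < omegaVol n := omegaVol_pos hn
    have : 0 ≤ c * omegaVol n * n := by positivity
    exact mul_nonneg this h1

lemma nuModel_gauss (hn : 0 < n) (hc : 0 < c) {s : ℝ} (hs : 0 < s) :
    ∫⁻ y, ENNReal.ofReal (Real.exp (-y ^ 2 / (4 * s))) ∂(nuModel n c) =
      ENNReal.ofReal (c * (4 * Real.pi * s) ^ (n / 2)) := by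
  have hωpos := omegaVol_pos hn
  set b : ℝ := 1 / (4 * s) with hb
  have hbpos : 0 < b := by positivity
  rw [nuModel, lintegral_withDensity_eq_lintegral_mul _
    (by fun_prop) (by fun_prop)]
  have heq : ∀ y ∈ Ioi (0:ℝ),
      (ENNReal.ofReal (c * omegaVol n * n * y ^ (n - 1)) *
        ENNReal.ofReal (Real.exp (-y ^ 2 / (4 * s)))) =
      ENNReal.ofReal (c * omegaVol n * n * (y ^ (n - 1) * Real.exp (-b * y ^ (2:ℝ)))) := by
    intro y hy
    rw [← ENNReal.ofReal_mul (by
      have h1 : (0:ℝ) ≤ y ^ (n - 1) := Real.rpow_nonneg (le_of_lt hy) _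
      have : 0 ≤ c * omegaVol n * n := by positivity
      exact mul_nonneg this h1)]
    congr 1
    rw [Real.rpow_two]
    rw [hb]
    ring_nf
  simp only [Pi.mul_apply]
  rw [setLIntegral_congr_fun measurableSet_Ioi heq]
  have hint : IntegrableOn (fun y : ℝ => y ^ (n - 1) * Real.exp (-b * y ^ (2:ℝ))) (Ioi 0) := by
    have := integrableOn_rpow_mul_exp_neg_mul_sq hbpos (s := n - 1) (by linarith)
    refine this.congr_fun (fun y hy => ?_) measurableSet_Ioi
    rw [Real.rpow_two]
  have hint2 : IntegrableOn
      (fun y : ℝ => c * omegaVol n * n * (y ^ (n - 1) * Real.exp (-b * y ^ (2:ℝ)))) (Ioi 0) :=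
    hint.const_mul _
  rw [← ofReal_integral_eq_lintegral_ofReal hint2 (by
    filter_upwards [ae_restrict_mem measurableSet_Ioi] with y hy
    have h1 : (0:ℝ) ≤ y ^ (n - 1) := Real.rpow_nonneg (le_of_lt hy) _
    have h2 : (0:ℝ) ≤ Real.exp (-b * y ^ (2:ℝ)) := (Real.exp_pos _).le
    have : 0 ≤ c * omegaVol n * n := by positivity
    positivity)]
  congr 1
  rw [MeasureTheory.integral_const_mul,
    integral_rpow_mul_exp_neg_mul_rpow (by norm_num : (0:ℝ) < 2) (by linarith) hbpos]
  rw [sub_add_cancel]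
  have hGamma : Real.Gamma (n / 2 + 1) = (n / 2) * Real.Gamma (n / 2) := by
    rw [Real.Gamma_add_one (by positivity)]
  have hGpos : 0 < Real.Gamma (n / 2) := Real.Gamma_pos_of_pos (by positivity)
  have hbpow : b ^ (-n / 2) = (4 * s) ^ (n / 2) := by
    rw [hb, one_div, Real.inv_rpow (by positivity : (0:ℝ) ≤ 4*s),
      ← Real.rpow_neg (by positivity : (0:ℝ) ≤ 4*s), neg_div, neg_neg]
  have hmul : (4 * Real.pi * s) ^ (n / 2) = (4 * s) ^ (n / 2) * Real.pi ^ (n / 2) := by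
    rw [← Real.mul_rpow (by positivity) Real.pi_pos.le]
    ring_nf
  rw [hbpow, hmul, omegaVol, hGamma]
  field_simp


lemma moment_ext {ρ ρ' : Measure ℝ} [IsFiniteMeasure ρ] [IsFiniteMeasure ρ']
    (hρ : ρ (Icc (0:ℝ) 1)ᶜ = 0) (hρ' : ρ' (Icc (0:ℝ) 1)ᶜ = 0)
    (h : ∀ k : ℕ, ∫⁻ v, ENNReal.ofReal (v ^ k) ∂ρ = ∫⁻ v, ENNReal.ofReal (v ^ k) ∂ρ') :
    ρ = ρ' := by
  have hae : ∀ᵐ v ∂ρ, v ∈ Icc (0:ℝ) 1 := by rw [ae_iff]; exact hρ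
  have hae' : ∀ᵐ v ∂ρ', v ∈ Icc (0:ℝ) 1 := by rw [ae_iff]; exact hρ'
  have hmono : ∀ (σ : Measure ℝ) [IsFiniteMeasure σ], (∀ᵐ v ∂σ, v ∈ Icc (0:ℝ) 1) →
      ∀ k : ℕ, Integrable (fun v : ℝ => v ^ k) σ := by
    intro σ _ hσ k
    refine Integrable.mono' (integrable_const 1) (by fun_prop) ?_
    filter_upwards [hσ] with v hv
    rw [Real.norm_eq_abs, abs_of_nonneg (pow_nonneg hv.1 _)]
    exact pow_le_one₀ hv.1 hv.2
  have hreal : ∀ k : ℕ, ∫ v, v ^ k ∂ρ = ∫ v, v ^ k ∂ρ' := by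
    intro k
    have e1 : ∫ v, v ^ k ∂ρ = (∫⁻ v, ENNReal.ofReal (v ^ k) ∂ρ).toReal := by
      rw [integral_eq_lintegral_of_nonneg_ae ?_ (by fun_prop)]
      filter_upwards [hae] with v hv using pow_nonneg hv.1 _
    have e2 : ∫ v, v ^ k ∂ρ' = (∫⁻ v, ENNReal.ofReal (v ^ k) ∂ρ').toReal := by
      rw [integral_eq_lintegral_of_nonneg_ae ?_ (by fun_prop)]
      filter_upwards [hae'] with v hv using pow_nonneg hv.1 _
    rw [e1, e2, h k]
  have hpoly : ∀ p : Polynomial ℝ, ∫ v, p.eval v ∂ρ = ∫ v, p.eval v ∂ρ' := by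
    intro p
    have hev : ∀ v : ℝ, p.eval v =
        ∑ i ∈ Finset.range (p.natDegree + 1), p.coeff i * v ^ i := fun v =>
      Polynomial.eval_eq_sum_range (p := p) v
    simp only [hev]
    rw [integral_finset_sum _ (fun i _ => (hmono ρ hae i).const_mul _),
      integral_finset_sum _ (fun i _ => (hmono ρ' hae' i).const_mul _)]
    refine Finset.sum_congr rfl (fun i _ => ?_)
    rw [integral_const_mul, integral_const_mul, hreal i]
  have hbc : ∀ g : ℝ → ℝ, Continuous g → Integrable g ρ → Integrable g ρ' →
      ∫ v, g v ∂ρ = ∫ v, g v ∂ρ' := by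
    intro g hg hgi hgi'
    set A := ∫ v, g v ∂ρ with hA
    set B := ∫ v, g v ∂ρ' with hB
    have key : ∀ ε : ℝ, 0 < ε → |A - B| ≤ ε * ((ρ univ).toReal + (ρ' univ).toReal) := by
      intro ε hε
      obtain ⟨p, hp⟩ := exists_polynomial_near_of_continuousOn 0 1 g hg.continuousOn ε hε
      have est : ∀ (σ : Measure ℝ) [IsFiniteMeasure σ], (∀ᵐ v ∂σ, v ∈ Icc (0:ℝ) 1) →
          Integrable g σ → |∫ v, g v ∂σ - ∫ v, p.eval v ∂σ| ≤ ε * (σ univ).toReal := by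
        intro σ _ hσ hgiσ
        have hpint : Integrable (fun v : ℝ => p.eval v) σ := by
          have : (fun v : ℝ => p.eval v) =
              fun v => ∑ i ∈ Finset.range (p.natDegree + 1), p.coeff i * v ^ i := by
            funext v; exact Polynomial.eval_eq_sum_range (p := p) v
          rw [this]
          exact integrable_finset_sum _ (fun i _ => (hmono σ hσ i).const_mul _)
        rw [← integral_sub hgiσ hpint, ← Real.norm_eq_abs]
        refine norm_integral_le_of_norm_le_const ?_
        filter_upwards [hσ] with v hv
        rw [Real.norm_eq_abs, abs_sub_comm]
        exact (hp v hv).le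
      have h1 := est ρ hae hgi
      have h2 := est ρ' hae' hgi'
      have h3 := hpoly p
      set P := ∫ v, p.eval v ∂ρ with hP
      set P' := ∫ v, p.eval v ∂ρ' with hP'
      have hABP : |A - B| ≤ |A - P| + |B - P'| := by
        have e : A - B = (A - P) - (B - P') := by rw [h3]; ring
        rw [e]
        exact abs_sub _ _
      calc |A - B| ≤ |A - P| + |B - P'| := hABP
        _ ≤ ε * (ρ univ).toReal + ε * (ρ' univ).toReal := add_le_add h1 h2
        _ = ε * ((ρ univ).toReal + (ρ' univ).toReal) := by ring
    set M := (ρ univ).toReal + (ρ' univ).toReal with hM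
    have hM0 : 0 ≤ M := by positivity
    have hle : |A - B| ≤ 0 := by
      by_contra hpos
      push_neg at hpos
      have := key (|A - B| / (2 * (M + 1))) (by positivity)
      have hlt : |A - B| / (2 * (M + 1)) * M < |A - B| := by
        rw [div_mul_eq_mul_div, div_lt_iff₀ (by positivity)]
        nlinarith
      linarith
    have := abs_nonneg (A - B)
    have : |A - B| = 0 := le_antisymm hle this
    have := abs_eq_zero.mp this
    linarith [sub_eq_zero.mp this]
  refine ext_of_forall_lintegral_eq_of_IsFiniteMeasure (fun f => ?_)
  have hg : ∫ v, ((f v : ℝ)) ∂ρ = ∫ v, ((f v : ℝ)) ∂ρ' :=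
    hbc _ (NNReal.continuous_coe.comp f.continuous)
      (f.integrable_of_nnreal ρ) (f.integrable_of_nnreal ρ')
  have e1 := BoundedContinuousFunction.toReal_lintegral_coe_eq_integral f ρ
  have e2 := BoundedContinuousFunction.toReal_lintegral_coe_eq_integral f ρ'
  have fin1 := (BoundedContinuousFunction.lintegral_lt_top_of_nnreal ρ f).ne
  have fin2 := (BoundedContinuousFunction.lintegral_lt_top_of_nnreal ρ' f).ne
  exact (ENNReal.toReal_eq_toReal_iff' fin1 fin2).mp (by rw [e1, e2, hg])


section Gauss

/-- The compression map `y ↦ exp (-y²)`. -/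
noncomputable def wmap (y : ℝ) : ℝ := Real.exp (-y ^ 2)

lemma wmap_cont : Continuous wmap := by unfold wmap; fun_prop

lemma wmap_meas : Measurable wmap := wmap_cont.measurable

lemma wmap_mem (y : ℝ) : wmap y ∈ Icc (0:ℝ) 1 :=
  ⟨(Real.exp_pos _).le, Real.exp_le_one_iff.mpr (neg_nonpos.mpr (sq_nonneg y))⟩

/-- The compressed measure. -/
noncomputable def rhoOf (ν : Measure ℝ) : Measure ℝ :=
  Measure.map wmap (ν.withDensity (fun y => ENNReal.ofReal (wmap y)))

lemma rhoOf_lintegral (ν : Measure ℝ) {f : ℝ → ℝ≥0∞} (hf : Measurable f) :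
    ∫⁻ v, f v ∂(rhoOf ν) = ∫⁻ y, f (wmap y) * ENNReal.ofReal (wmap y) ∂ν := by
  rw [rhoOf, lintegral_map hf wmap_meas,
    lintegral_withDensity_eq_lintegral_mul _ (wmap_meas.ennreal_ofReal)
      (g := fun a => f (wmap a)) (hf.comp wmap_meas)]
  simp only [Pi.mul_apply]
  exact lintegral_congr (fun y => mul_comm _ _)

lemma rhoOf_moment (ν : Measure ℝ) (k : ℕ) :
    ∫⁻ v, ENNReal.ofReal (v ^ k) ∂(rhoOf ν) =
      ∫⁻ y, ENNReal.ofReal (Real.exp (-((k:ℝ) + 1) * y ^ 2)) ∂ν := by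
  rw [rhoOf_lintegral ν (by fun_prop)]
  refine lintegral_congr (fun y => ?_)
  rw [← ENNReal.ofReal_mul (pow_nonneg (wmap_mem y).1 k)]
  congr 1
  rw [wmap, ← Real.exp_nat_mul, ← Real.exp_add]
  congr 1
  ring

lemma rhoOf_compl (ν : Measure ℝ) : rhoOf ν (Icc (0:ℝ) 1)ᶜ = 0 := by
  rw [rhoOf, Measure.map_apply wmap_meas (measurableSet_Icc.compl)]
  have : wmap ⁻¹' (Icc (0:ℝ) 1)ᶜ = ∅ := by
    ext y
    simp only [mem_preimage, mem_compl_iff, mem_empty_iff_false, iff_false, not_not]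
    exact wmap_mem y
  rw [this, measure_empty]

lemma gauss_ext {ν ν' : Measure ℝ} (hν : ν (Iio (0:ℝ)) = 0) (hν' : ν' (Iio (0:ℝ)) = 0)
    (h : ∀ k : ℕ, ∫⁻ y, ENNReal.ofReal (Real.exp (-((k:ℝ) + 1) * y ^ 2)) ∂ν =
      ∫⁻ y, ENNReal.ofReal (Real.exp (-((k:ℝ) + 1) * y ^ 2)) ∂ν')
    (hfin : ∫⁻ y, ENNReal.ofReal (Real.exp (-((0:ℝ) + 1) * y ^ 2)) ∂ν ≠ ∞) :
    ∀ r : ℝ, ν (Iio r) = ν' (Iio r) := by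
  have hmom : ∀ k : ℕ, ∫⁻ v, ENNReal.ofReal (v ^ k) ∂(rhoOf ν) =
      ∫⁻ v, ENNReal.ofReal (v ^ k) ∂(rhoOf ν') := by
    intro k
    rw [rhoOf_moment, rhoOf_moment, h k]
  have hfin1 : IsFiniteMeasure (rhoOf ν) := by
    constructor
    have := rhoOf_moment ν 0
    simp only [pow_zero, ENNReal.ofReal_one] at this
    rw [← lintegral_one, this]
    simp only [Nat.cast_zero]
    exact lt_of_le_of_ne le_top hfin
  have hfin2 : IsFiniteMeasure (rhoOf ν') := by
    constructor
    have := rhoOf_moment ν' 0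
    simp only [pow_zero, ENNReal.ofReal_one] at this
    rw [← lintegral_one, this, ← h 0]
    simp only [Nat.cast_zero]
    exact lt_of_le_of_ne le_top hfin
  have hrho : rhoOf ν = rhoOf ν' := moment_ext (rhoOf_compl ν) (rhoOf_compl ν') hmom
  -- recover Iio measures
  have hrec : ∀ (σ : Measure ℝ), σ (Iio (0:ℝ)) = 0 → ∀ r : ℝ, 0 < r →
      σ (Iio r) = ∫⁻ v, (Ioi (Real.exp (-r ^ 2))).indicator
        (fun v => (ENNReal.ofReal v)⁻¹) v ∂(rhoOf σ) := by
    intro σ hσ r hr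
    rw [rhoOf_lintegral σ (Measurable.indicator
      (by fun_prop : Measurable fun v : ℝ => (ENNReal.ofReal v)⁻¹) measurableSet_Ioi)]
    have hptw : ∀ y : ℝ, (Ioi (Real.exp (-r ^ 2))).indicator
        (fun v => (ENNReal.ofReal v)⁻¹) (wmap y) * ENNReal.ofReal (wmap y) =
        (Ioo (-r) r).indicator 1 y := by
      intro y
      have hiff : wmap y ∈ Ioi (Real.exp (-r ^ 2)) ↔ y ∈ Ioo (-r) r := by
        rw [mem_Ioi, wmap, Real.exp_lt_exp, mem_Ioo]
        constructor
        · intro hlt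
          have : y ^ 2 < r ^ 2 := by nlinarith
          constructor <;> nlinarith
        · intro ⟨h1, h2⟩
          nlinarith
      by_cases hy : wmap y ∈ Ioi (Real.exp (-r ^ 2))
      · rw [indicator_of_mem hy, indicator_of_mem (hiff.mp hy)]
        rw [Pi.one_apply, ENNReal.inv_mul_cancel (by
            simp only [ne_eq, ENNReal.ofReal_eq_zero, not_le]
            exact (Real.exp_pos _)) ENNReal.ofReal_ne_top]
      · rw [indicator_of_notMem hy, indicator_of_notMem (fun hm => hy (hiff.mpr hm)),
          zero_mul]
    simp only [hptw]
    rw [lintegral_indicator_one measurableSet_Ioo]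
    have h1 : σ (Iic (-r)) = 0 :=
      measure_mono_null (Iic_subset_Iio.mpr (by linarith)) hσ
    apply le_antisymm
    · calc σ (Iio r) ≤ σ (Ioo (-r) r ∪ Iic (-r)) := by
            refine measure_mono (fun y hy => ?_)
            rcases le_or_gt y (-r) with hc | hc
            · exact Or.inr hc
            · exact Or.inl ⟨hc, hy⟩
        _ ≤ σ (Ioo (-r) r) + σ (Iic (-r)) := measure_union_le _ _
        _ = σ (Ioo (-r) r) := by rw [h1, add_zero]
    · exact measure_mono Ioo_subset_Iio_self
  have hzero : ∀ (σ : Measure ℝ), σ (Iio (0:ℝ)) = 0 → ∀ r : ℝ, r ≤ 0 → σ (Iio r) = 0 :=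
    fun σ hσ r hr => measure_mono_null (Iio_subset_Iio hr) hσ
  intro r
  rcases le_or_gt r 0 with hr | hr
  · rw [hzero ν hν r hr, hzero ν' hν' r hr]
  · rw [hrec ν hν r hr, hrec ν' hν' r hr, hrho]

end Gauss


/-- Agreement on `Iio r` implies measure equality (π-system argument). -/
lemma measure_ext_Iio {ν ν' : Measure ℝ} (h : ∀ r : ℝ, ν (Iio r) = ν' (Iio r))
    (hfin : ∀ k : ℕ, ν (Iio (k : ℝ)) ≠ ∞) : ν = ν' := by
  refine Measure.ext_of_generateFrom_of_iUnion (range Iio) (fun k => Iio (k : ℝ))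
    (by rw [BorelSpace.measurable_eq (α := ℝ), borel_eq_generateFrom_Iio])
    isPiSystem_Iio ?_ (fun k => ⟨_, rfl⟩) hfin ?_
  · ext y
    simp only [mem_iUnion, mem_Iio, mem_univ, iff_true]
    obtain ⟨k, hk⟩ := exists_nat_gt y
    exact ⟨k, hk⟩
  · rintro _ ⟨r, rfl⟩
    exact h r

end Auxiliary

/-- `Θ_x(s) = c` for every `s > 0` if and only if `μ(B_r(x)) = c·ω_n·r^n`
for every `r > 0`. -/
theorem theta_volume_const_iff {X : Type*} [MetricSpace X] [MeasurableSpace X] [BorelSpace X]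
    (μ : Measure X) (hball : BallMeasureNontrivial μ)
    (n : ℝ) (hn : 0 < n) (x : X) (c : ℝ) (hc : 0 < c) :
    (∀ s : ℝ, 0 < s → Theta μ n x s = ENNReal.ofReal c) ↔
      (∀ r : ℝ, 0 < r → μ (ball x r) = ENNReal.ofReal (c * omegaVol n * r ^ n)) := by
  have hd : Measurable (fun y : X => dist x y) :=
    (continuous_const.dist continuous_id).measurable
  set ν : Measure ℝ := Measure.map (fun y => dist x y) μ with hνdef
  have hmap : ∀ r : ℝ, ν (Iio r) = μ (ball x r) := by
    intro r
    rw [hνdef, Measure.map_apply hd measurableSet_Iio]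
    congr 1
    ext y
    simp [mem_ball, dist_comm]
  have hν0 : ν (Iio 0) = 0 := by
    rw [hmap]
    simp [Metric.ball_eq_empty.mpr le_rfl]
  have hν0' : nuModel n c (Iio 0) = 0 := nuModel_Iio_nonpos le_rfl
  have htrans : ∀ s : ℝ,
      ∫⁻ y, ENNReal.ofReal (Real.exp (-(dist x y) ^ 2 / (4 * s))) ∂μ =
      ∫⁻ t, ENNReal.ofReal (Real.exp (-t ^ 2 / (4 * s))) ∂ν := by
    intro s
    rw [hνdef, lintegral_map (by fun_prop) hd]
  have hiff : ∀ s : ℝ, 0 < s → (Theta μ n x s = ENNReal.ofReal c ↔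
      ∫⁻ t, ENNReal.ofReal (Real.exp (-t ^ 2 / (4 * s))) ∂ν =
        ENNReal.ofReal (c * (4 * Real.pi * s) ^ (n / 2))) := by
    intro s hs
    have hapos : (0:ℝ) < (4 * Real.pi * s) ^ (n / 2) :=
      Real.rpow_pos_of_pos (by positivity) _
    have hA : ENNReal.ofReal ((4 * Real.pi * s) ^ (-(n / 2))) =
        (ENNReal.ofReal ((4 * Real.pi * s) ^ (n / 2)))⁻¹ := by
      rw [Real.rpow_neg (by positivity : (0:ℝ) ≤ 4 * Real.pi * s),
        ENNReal.ofReal_inv_of_pos hapos]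
    rw [Theta, hA, htrans s]
    set I := ∫⁻ t, ENNReal.ofReal (Real.exp (-t ^ 2 / (4 * s))) ∂ν with hI
    set a := ENNReal.ofReal ((4 * Real.pi * s) ^ (n / 2)) with ha
    have ha0 : a ≠ 0 := by
      rw [ha]; simpa using hapos
    have hat : a ≠ ⊤ := ENNReal.ofReal_ne_top
    constructor
    · intro hEq
      have : a * (a⁻¹ * I) = a * ENNReal.ofReal c := by rw [hEq]
      rw [← mul_assoc, ENNReal.mul_inv_cancel ha0 hat, one_mul] at this
      rw [this, ha, ← ENNReal.ofReal_mul hapos.le, mul_comm]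
    · intro hEq
      rw [hEq, ENNReal.ofReal_mul hc.le, ← ha, mul_comm, mul_assoc,
        ENNReal.mul_inv_cancel ha0 hat, mul_one]
  constructor
  · -- Θ constant ⇒ ball volumes
    intro hΘ r hr
    have hexp : ∀ k : ℕ, ∀ t : ℝ,
        -t ^ 2 / (4 * (1 / (4 * ((k:ℝ) + 1)))) = -((k:ℝ) + 1) * t ^ 2 := by
      intro k t
      have hk1 : ((k:ℝ) + 1) ≠ 0 := by positivity
      field_simp
    have hval : ∀ k : ℕ, ∫⁻ y, ENNReal.ofReal (Real.exp (-((k:ℝ) + 1) * y ^ 2)) ∂ν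
        = ENNReal.ofReal
            (c * (4 * Real.pi * (1 / (4 * ((k:ℝ) + 1)))) ^ (n / 2)) := by
      intro k
      have hs : (0:ℝ) < 1 / (4 * ((k:ℝ) + 1)) := by positivity
      have h1 := (hiff _ hs).mp (hΘ _ hs)
      rw [← h1]
      refine lintegral_congr (fun t => ?_)
      rw [hexp k t]
    have hvalm : ∀ k : ℕ,
        ∫⁻ y, ENNReal.ofReal (Real.exp (-((k:ℝ) + 1) * y ^ 2)) ∂(nuModel n c)
        = ENNReal.ofReal
            (c * (4 * Real.pi * (1 / (4 * ((k:ℝ) + 1)))) ^ (n / 2)) := by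
      intro k
      have hs : (0:ℝ) < 1 / (4 * ((k:ℝ) + 1)) := by positivity
      have h2 := nuModel_gauss hn hc hs (n := n) (c := c)
      rw [← h2]
      refine lintegral_congr (fun t => ?_)
      rw [hexp k t]
    have hkey : ∀ k : ℕ,
        ∫⁻ y, ENNReal.ofReal (Real.exp (-((k:ℝ) + 1) * y ^ 2)) ∂ν =
        ∫⁻ y, ENNReal.ofReal (Real.exp (-((k:ℝ) + 1) * y ^ 2)) ∂(nuModel n c) := by
      intro k
      rw [hval k, hvalm k]
    have hfin : ∫⁻ y, ENNReal.ofReal (Real.exp (-((0:ℝ) + 1) * y ^ 2)) ∂ν ≠ ∞ := by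
      have h0 := hval 0
      simp only [Nat.cast_zero] at h0
      rw [h0]
      exact ENNReal.ofReal_ne_top
    have := gauss_ext hν0 hν0' hkey hfin r
    rw [hmap r] at this
    rw [this, nuModel_Iio hn hc hr]
  · -- ball volumes ⇒ Θ constant
    intro hB
    have hνeq : ν = nuModel n c := by
      refine measure_ext_Iio (fun r => ?_) (fun k => ?_)
      · rcases le_or_gt r 0 with hr | hr
        · rw [measure_mono_null (Iio_subset_Iio hr) hν0, nuModel_Iio_nonpos hr]
        · rw [hmap r, hB r hr, nuModel_Iio hn hc hr]
      · rcases Nat.eq_zero_or_pos k with hk | hk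
        · subst hk
          simp only [Nat.cast_zero]
          rw [hν0]
          exact ENNReal.zero_ne_top
        · rw [hmap, hB _ (by exact_mod_cast hk)]
          exact ENNReal.ofReal_ne_top
    intro s hs
    rw [hiff s hs, hνeq]
    exact nuModel_gauss hn hc hs
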